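/- arXiv:1501.02881 — 2 statements merged into one kernel-verified Lean document; each statement's English description precedes it below -/
import Mathlib

section
/- Let R be rotation by irrational α on S¹ with convergent denominators q_n, and suppose the subsequence n_k satisfies: n_k even, and 1 + Σ_{k=1}^ℓ 2 q_{n_k} < q_{n_ℓ + 1} for all ℓ ≥ 1. Set J'_ℓ = [Σ_{k=1}^{ℓ-1} 2{q_{n_k} α}, Σ_{k=1}^{ℓ-1} 2{q_{n_k} α} + {q_{n_ℓ} α}). Then for each ℓ > 1, the intervals R^i(J'_ℓ) for i = 0, ..., q_{n_ℓ} are pairwise disjoint, and each is disjoint from [0, {q_{n_ℓ} α}) and from [1 - {q_{n_ℓ} α}, 1). -/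
/-- The continued fraction partial quotients of `α`, via the Gauss map. -/
noncomputable def cfA (α : ℝ) : ℕ → ℤ := fun n => ⌊(fun x : ℝ => (Int.fract x)⁻¹)^[n] α⌋

/-- The denominators of the continued fraction convergents of `α`:
`q 0 = 1`, `q 1 = a 1`, `q (n+2) = a (n+2) * q (n+1) + q n`. -/
noncomputable def cfQ (α : ℝ) : ℕ → ℤ
  | 0 => 1
  | 1 => cfA α 1
  | (n+2) => cfA α (n+2) * cfQ α (n+1) + cfQ α n

/-- The numerators of the continued fraction convergents of `α`. -/
noncomputable def cfP (α : ℝ) : ℕ → ℤ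
  | 0 => cfA α 0
  | 1 => cfA α 1 * cfA α 0 + 1
  | (n+2) => cfA α (n+2) * cfP α (n+1) + cfP α n


/-- Gauss map iterates. -/
noncomputable def gx (α : ℝ) (n : ℕ) : ℝ := (fun x : ℝ => (Int.fract x)⁻¹)^[n] α

lemma gx_zero (α : ℝ) : gx α 0 = α := rfl

lemma gx_succ (α : ℝ) (n : ℕ) : gx α (n+1) = (Int.fract (gx α n))⁻¹ := by
  unfold gx
  rw [Function.iterate_succ_apply']

lemma cfA_eq (α : ℝ) (n : ℕ) : cfA α n = ⌊gx α n⌋ := rfl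

lemma gx_irr (α : ℝ) (hirr : Irrational α) : ∀ n, Irrational (gx α n) := by
  intro n
  induction n with
  | zero => exact hirr
  | succ n ih =>
    rw [gx_succ]
    exact ((ih.sub_intCast _).inv)

lemma fract_gx_pos (α : ℝ) (hirr : Irrational α) (n : ℕ) : 0 < Int.fract (gx α n) := by
  rcases lt_or_eq_of_le (Int.fract_nonneg (gx α n)) with h | h
  · exact h
  · exfalso
    have := (gx_irr α hirr n).sub_intCast ⌊gx α n⌋
    rw [← Int.self_sub_floor] at h
    exact this.ne_zero h.symm

lemma gx_gt_one (α : ℝ) (hirr : Irrational α) (n : ℕ) : 1 < gx α (n+1) := by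
  rw [gx_succ]
  rw [one_lt_inv_iff₀]
  exact ⟨fract_gx_pos α hirr n, Int.fract_lt_one _⟩

lemma cfA_pos (α : ℝ) (hirr : Irrational α) (n : ℕ) : 1 ≤ cfA α (n+1) := by
  rw [cfA_eq]
  exact_mod_cast Int.le_floor.2 (by exact_mod_cast (gx_gt_one α hirr n).le)

lemma cfQ_pos (α : ℝ) (hirr : Irrational α) : ∀ n, 1 ≤ cfQ α n := by
  intro n
  induction n using Nat.strong_induction_on with
  | _ n ih =>
    match n with
    | 0 => simp [cfQ]
    | 1 => exact cfA_pos α hirr 0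
    | (n+2) =>
      have h1 := ih (n+1) (by omega)
      have h0 := ih n (by omega)
      have ha := cfA_pos α hirr (n+1)
      show 1 ≤ cfA α (n+2) * cfQ α (n+1) + cfQ α n
      nlinarith

/-- Extended denominators with `Q' 0 = q_{-1} = 0`. -/
noncomputable def Q' (α : ℝ) : ℕ → ℤ
  | 0 => 0
  | (n+1) => cfQ α n

/-- Extended numerators with `P' 0 = p_{-1} = 1`. -/
noncomputable def P' (α : ℝ) : ℕ → ℤ
  | 0 => 1
  | (n+1) => cfP α n

lemma Q'_rec (α : ℝ) (n : ℕ) : Q' α (n+2) = cfA α (n+1) * Q' α (n+1) + Q' α n := by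
  match n with
  | 0 => show cfQ α 1 = cfA α 1 * cfQ α 0 + 0; simp [cfQ]
  | (m+1) => show cfQ α (m+2) = _ * cfQ α (m+1) + cfQ α m; rfl

lemma P'_rec (α : ℝ) (n : ℕ) : P' α (n+2) = cfA α (n+1) * P' α (n+1) + P' α n := by
  match n with
  | 0 => show cfP α 1 = cfA α 1 * cfP α 0 + 1; simp [cfP]
  | (m+1) => show cfP α (m+2) = _ * cfP α (m+1) + cfP α m; rfl

lemma Q'_nonneg (α : ℝ) (hirr : Irrational α) (n : ℕ) : 0 ≤ Q' α n :=
  match n with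
  | 0 => le_refl _
  | (n+1) => le_trans zero_le_one (cfQ_pos α hirr n)

/-- gx recurrence: `gx n * gx (n+1) = ⌊gx n⌋ * gx (n+1) + 1`. -/
lemma gx_mul (α : ℝ) (hirr : Irrational α) (n : ℕ) :
    gx α n * gx α (n+1) = (⌊gx α n⌋ : ℝ) * gx α (n+1) + 1 := by
  have hf : Int.fract (gx α n) ≠ 0 := (fract_gx_pos α hirr n).ne'
  rw [gx_succ]
  field_simp
  exact (Int.floor_add_fract _).symm

/-- Main identity: `α * (q_n * x_{n+1} + q_{n-1}) = p_n * x_{n+1} + p_{n-1}`. -/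
lemma main_id (α : ℝ) (hirr : Irrational α) (n : ℕ) :
    α * ((Q' α (n+1) : ℝ) * gx α (n+1) + (Q' α n : ℝ))
      = (P' α (n+1) : ℝ) * gx α (n+1) + (P' α n : ℝ) := by
  induction n with
  | zero =>
    have h0 := gx_mul α hirr 0
    rw [gx_zero] at h0
    show α * ((cfQ α 0 : ℝ) * gx α 1 + ((0:ℤ) : ℝ)) = (cfP α 0 : ℝ) * gx α 1 + ((1:ℤ) : ℝ)
    simp only [cfQ, cfP, cfA_eq, gx_zero]
    push_cast
    linear_combination h0
  | succ n ih =>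
    have hmul := gx_mul α hirr (n+1)
    have hQ : (Q' α (n+2) : ℝ) = (cfA α (n+1) : ℝ) * (Q' α (n+1) : ℝ) + (Q' α n : ℝ) := by
      rw [Q'_rec]; push_cast; ring
    have hP : (P' α (n+2) : ℝ) = (cfA α (n+1) : ℝ) * (P' α (n+1) : ℝ) + (P' α n : ℝ) := by
      rw [P'_rec]; push_cast; ring
    have hx : gx α (n+2) ≠ 0 := by
      have := gx_gt_one α hirr (n+1); linarith
    -- multiply ih by gx (n+2) and use hmul
    have key : gx α (n+1) * gx α (n+2) = (cfA α (n+1) : ℝ) * gx α (n+2) + 1 := by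
      rw [cfA_eq]; exact hmul
    rw [hQ, hP]
    linear_combination (gx α (n+2)) * ih + ((P' α (n+1) : ℝ) - α * (Q' α (n+1) : ℝ)) * key
lemma det_id (α : ℝ) (n : ℕ) :
    P' α (n+1) * Q' α n - P' α n * Q' α (n+1) = (-1)^(n+1) := by
  induction n with
  | zero =>
    show cfP α 0 * 0 - 1 * cfQ α 0 = -1
    simp [cfQ]
  | succ n ih =>
    rw [P'_rec, Q'_rec]
    ring_nf
    ring_nf at ih
    linarith [ih]

lemma det_id' (α : ℝ) (n : ℕ) :
    cfP α (n+1) * cfQ α n - cfP α n * cfQ α (n+1) = (-1)^n := by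
  have := det_id α (n+1)
  show P' α (n+2) * Q' α (n+1) - P' α (n+1) * Q' α (n+2) = (-1)^n
  rw [this]
  ring

/-- The denominator `q_n x_{n+1} + q_{n-1}`. -/
noncomputable def cfD (α : ℝ) (n : ℕ) : ℝ := (cfQ α n : ℝ) * gx α (n+1) + (Q' α n : ℝ)

lemma cfD_gt_one (α : ℝ) (hirr : Irrational α) (n : ℕ) : 1 < cfD α n := by
  have h1 := gx_gt_one α hirr n
  have h2 := cfQ_pos α hirr n
  have h3 := Q'_nonneg α hirr n
  have h2' : (1:ℝ) ≤ (cfQ α n : ℝ) := by exact_mod_cast h2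
  have h3' : (0:ℝ) ≤ (Q' α n : ℝ) := by exact_mod_cast h3
  unfold cfD
  nlinarith

lemma cfD_gt_q (α : ℝ) (hirr : Irrational α) (n : ℕ) :
    (cfQ α (n+1) : ℝ) < cfD α n := by
  have hq1 : cfQ α (n+1) = cfA α (n+1) * cfQ α n + Q' α n := Q'_rec α n
  have h1 := gx_gt_one α hirr n
  have h2 := cfQ_pos α hirr n
  have hfr := fract_gx_pos α hirr (n+1)
  have hfloor : (cfA α (n+1) : ℝ) < gx α (n+1) := by
    rw [cfA_eq]
    have h := Int.floor_add_fract (gx α (n+1))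
    linarith
  have h2' : (1:ℝ) ≤ (cfQ α n : ℝ) := by exact_mod_cast h2
  unfold cfD
  rw [hq1]
  push_cast
  nlinarith

/-- `b α n = (-1)^n (q_n α - p_n)`. -/
noncomputable def cfB (α : ℝ) (n : ℕ) : ℝ := (-1)^n * ((cfQ α n : ℝ) * α - (cfP α n : ℝ))

lemma cfB_eq (α : ℝ) (hirr : Irrational α) (n : ℕ) : cfB α n = 1 / cfD α n := by
  have hmain := main_id α hirr n
  have hdet := det_id α n
  have hD : cfD α n ≠ 0 := by linarith [cfD_gt_one α hirr n]
  have hdet' : ((P' α (n+1) : ℝ) * (Q' α n : ℝ) - (P' α n : ℝ) * (Q' α (n+1) : ℝ)) = (-1)^(n+1) := by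
    exact_mod_cast congrArg (fun z : ℤ => (z : ℝ)) hdet
  have hQ : (Q' α (n+1) : ℝ) = (cfQ α n : ℝ) := rfl
  have hP : (P' α (n+1) : ℝ) = (cfP α n : ℝ) := rfl
  unfold cfB
  rw [eq_div_iff hD]
  unfold cfD
  rw [← hQ, ← hP]
  have hsq : ((-1:ℝ)^(n+1)) * ((-1:ℝ)^(n+1)) = 1 := by
    rw [← pow_add, ← two_mul, pow_mul]
    norm_num
  have : (-1:ℝ)^n = -(-1:ℝ)^(n+1) := by ring
  rw [this]
  linear_combination hsq + ((-1:ℝ)^(n+1)) * hdet' - ((-1:ℝ)^(n+1)) * (Q' α (n+1) : ℝ) * hmain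

lemma cfB_pos (α : ℝ) (hirr : Irrational α) (n : ℕ) : 0 < cfB α n := by
  rw [cfB_eq α hirr n]
  exact div_pos one_pos (by linarith [cfD_gt_one α hirr n])
lemma cfB_lt_one (α : ℝ) (hirr : Irrational α) (n : ℕ) : cfB α n < 1 := by
  rw [cfB_eq α hirr n]
  have h := cfD_gt_one α hirr n
  rw [div_lt_one (by linarith)]
  exact h

lemma cfB_mul_q_lt_one (α : ℝ) (hirr : Irrational α) (n : ℕ) :
    cfB α n * (cfQ α (n+1) : ℝ) < 1 := by
  rw [cfB_eq α hirr n]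
  have h := cfD_gt_q α hirr n
  have h1 := cfD_gt_one α hirr n
  have hq : (1:ℝ) ≤ (cfQ α (n+1) : ℝ) := by exact_mod_cast cfQ_pos α hirr (n+1)
  rw [div_mul_eq_mul_div, one_mul, div_lt_one (by linarith)]
  exact h

/-- For even `n`, the fractional part of `q_n α` is exactly `cfB α n`. -/
lemma fract_q_mul (α : ℝ) (hirr : Irrational α) (n : ℕ) (hn : Even n) :
    Int.fract ((cfQ α n : ℝ) * α) = cfB α n := by
  have hpow : (-1:ℝ)^n = 1 := hn.neg_one_pow
  have hb : cfB α n = (cfQ α n : ℝ) * α - (cfP α n : ℝ) := by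
    unfold cfB; rw [hpow]; ring
  have h0 := cfB_pos α hirr n
  have h1 := cfB_lt_one α hirr n
  rw [hb] at h0 h1 ⊢
  have hfl : ⌊(cfQ α n : ℝ) * α⌋ = cfP α n := by
    rw [Int.floor_eq_iff]
    refine ⟨by linarith, by push_cast; linarith⟩
  rw [Int.fract, hfl]

/-- Best approximation property. -/
lemma best_approx (α : ℝ) (hirr : Irrational α) (N : ℕ) (m p : ℤ)
    (h1 : 1 ≤ m) (h2 : m < cfQ α (N+1)) :
    cfB α N ≤ |(m : ℝ) * α - (p : ℝ)| := by
  set x : ℤ := (-1)^(N+1) * (m * cfP α N - p * cfQ α N) with hx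
  set y : ℤ := (-1)^(N+1) * (p * cfQ α (N+1) - m * cfP α (N+1)) with hy
  have hdet := det_id' α N
  have ho : ((-1:ℤ)^(N+1)) * ((-1:ℤ)^N) = -1 := by
    rw [← pow_add]
    have : N + 1 + N = 2*N + 1 := by omega
    rw [this, pow_succ, pow_mul]
    norm_num
  have hm : x * cfQ α (N+1) + y * cfQ α N = m := by
    rw [hx, hy]
    linear_combination (-(m : ℤ)) * ((-1:ℤ)^(N+1)) * hdet + (-(m:ℤ)) * ho
  have hp : x * cfP α (N+1) + y * cfP α N = p := by
    rw [hx, hy]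
    linear_combination (-(p : ℤ)) * ((-1:ℤ)^(N+1)) * hdet + (-(p:ℤ)) * ho
  -- real versions
  have hmR : (x:ℝ) * (cfQ α (N+1) : ℝ) + (y:ℝ) * (cfQ α N : ℝ) = (m:ℝ) := by
    exact_mod_cast congrArg (fun z : ℤ => (z:ℝ)) hm
  have hpR : (x:ℝ) * (cfP α (N+1) : ℝ) + (y:ℝ) * (cfP α N : ℝ) = (p:ℝ) := by
    exact_mod_cast congrArg (fun z : ℤ => (z:ℝ)) hp
  have hBN : (cfQ α N : ℝ) * α - (cfP α N : ℝ) = (-1)^N * cfB α N := by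
    unfold cfB; rcases Nat.even_or_odd N with h | h
    · rw [h.neg_one_pow]; ring
    · rw [h.neg_one_pow]; ring
  have hBN1 : (cfQ α (N+1) : ℝ) * α - (cfP α (N+1) : ℝ) = (-1)^(N+1) * cfB α (N+1) := by
    unfold cfB; rcases Nat.even_or_odd (N+1) with h | h
    · rw [h.neg_one_pow]; ring
    · rw [h.neg_one_pow]; ring
  have hid : (m:ℝ) * α - (p:ℝ)
      = (x:ℝ) * ((-1)^(N+1) * cfB α (N+1)) + (y:ℝ) * ((-1)^N * cfB α N) := by
    rw [← hBN, ← hBN1]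
    linear_combination hpR - α * hmR
  have hsplit : (m:ℝ) * α - (p:ℝ) = (-1)^N * ((y:ℝ) * cfB α N - (x:ℝ) * cfB α (N+1)) := by
    rw [hid]; ring
  have habs : |(m:ℝ) * α - (p:ℝ)| = |(y:ℝ) * cfB α N - (x:ℝ) * cfB α (N+1)| := by
    rw [hsplit, abs_mul, abs_pow, abs_neg, abs_one, one_pow, one_mul]
  rw [habs]
  have hb0 := cfB_pos α hirr N
  have hb1 := cfB_pos α hirr (N+1)
  have hqN := cfQ_pos α hirr N
  rcases lt_trichotomy x 0 with hx0 | hx0 | hx0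
  · -- x ≤ -1, so y ≥ 1
    have hxle : (x:ℤ) ≤ -1 := by omega
    have hyq : y * cfQ α N = m - x * cfQ α (N+1) := by linarith [hm]
    have hyge : 1 ≤ y := by nlinarith [cfQ_pos α hirr (N+1)]
    have hxR : (x:ℝ) ≤ -1 := by exact_mod_cast hxle
    have hyR : (1:ℝ) ≤ (y:ℝ) := by exact_mod_cast hyge
    have : cfB α N ≤ (y:ℝ) * cfB α N - (x:ℝ) * cfB α (N+1) := by nlinarith
    calc cfB α N ≤ (y:ℝ) * cfB α N - (x:ℝ) * cfB α (N+1) := this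
    _ ≤ |(y:ℝ) * cfB α N - (x:ℝ) * cfB α (N+1)| := le_abs_self _
  · -- x = 0, m = y * q_N
    have hy1 : 1 ≤ y := by nlinarith [hm, hx0]
    have hyR : (1:ℝ) ≤ (y:ℝ) := by exact_mod_cast hy1
    rw [hx0]
    push_cast
    rw [zero_mul, sub_zero, abs_of_pos (by nlinarith)]
    nlinarith
  · -- x ≥ 1, y ≤ -1
    have hxge : 1 ≤ x := by omega
    have hyle : y ≤ -1 := by nlinarith [hm, h2]
    have hxR : (1:ℝ) ≤ (x:ℝ) := by exact_mod_cast hxge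
    have hyR : (y:ℝ) ≤ -1 := by exact_mod_cast hyle
    have : (y:ℝ) * cfB α N - (x:ℝ) * cfB α (N+1) ≤ -(cfB α N) := by nlinarith
    calc cfB α N ≤ -((y:ℝ) * cfB α N - (x:ℝ) * cfB α (N+1)) := by linarith
    _ ≤ |(y:ℝ) * cfB α N - (x:ℝ) * cfB α (N+1)| := neg_le_abs _
lemma coe_circle_sub (x y : ℝ) (h : (x : AddCircle (1:ℝ)) = y) : ∃ k : ℤ, x - y = k := by
  have h2 : ((x - y : ℝ) : AddCircle (1:ℝ)) = 0 := by
    rw [AddCircle.coe_sub, h, sub_self]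
  rw [AddCircle.coe_eq_zero_iff] at h2
  obtain ⟨n, hn⟩ := h2
  exact ⟨n, by rw [← hn]; simp⟩

lemma best_approx_abs (α : ℝ) (hirr : Irrational α) (N : ℕ) (m p : ℤ)
    (hm0 : m ≠ 0) (hmb : |m| < cfQ α (N+1)) :
    cfB α N ≤ |(m : ℝ) * α - (p : ℝ)| := by
  rcases lt_or_gt_of_ne hm0 with h | h
  · rw [abs_of_neg h] at hmb
    have hb := best_approx α hirr N (-m) (-p) (by omega) (by omega)
    have : |((-m : ℤ) : ℝ) * α - ((-p : ℤ) : ℝ)| = |(m:ℝ) * α - (p:ℝ)| := by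
      push_cast
      rw [← abs_neg]
      ring_nf
    rwa [this] at hb
  · rw [abs_of_pos h] at hmb
    exact best_approx α hirr N m p (by omega) (by omega)

/-- Disjointness of the intervals `R^i(J'_ℓ)`, `i = 0, …, q_{n_ℓ}`, from each other and from
`[0, {q_{n_ℓ} α})` and `[1 - {q_{n_ℓ} α}, 1)`. -/
theorem Jprime_orbit_disjoint (α : ℝ) (hirr : Irrational α) (hpos : 0 < α)
    (nseq : ℕ → ℕ) (heven : ∀ k, 1 ≤ k → Even (nseq k))
    (hA3 : ∀ l, 1 ≤ l →
      1 + ∑ k ∈ Finset.Icc 1 l, 2 * cfQ α (nseq k) < cfQ α (nseq l + 1))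
    (l : ℕ) (hl : 1 < l) :
    (∀ i j : ℕ, (i : ℤ) ≤ cfQ α (nseq l) → (j : ℤ) ≤ cfQ α (nseq l) → i ≠ j →
      Disjoint
        ((fun t : ℝ => (↑(t + (i : ℝ) * α) : AddCircle (1 : ℝ))) ''
          Set.Ico (∑ k ∈ Finset.Icc 1 (l - 1), 2 * Int.fract ((cfQ α (nseq k) : ℝ) * α))
            ((∑ k ∈ Finset.Icc 1 (l - 1), 2 * Int.fract ((cfQ α (nseq k) : ℝ) * α)) +
              Int.fract ((cfQ α (nseq l) : ℝ) * α)))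
        ((fun t : ℝ => (↑(t + (j : ℝ) * α) : AddCircle (1 : ℝ))) ''
          Set.Ico (∑ k ∈ Finset.Icc 1 (l - 1), 2 * Int.fract ((cfQ α (nseq k) : ℝ) * α))
            ((∑ k ∈ Finset.Icc 1 (l - 1), 2 * Int.fract ((cfQ α (nseq k) : ℝ) * α)) +
              Int.fract ((cfQ α (nseq l) : ℝ) * α)))) ∧
    (∀ i : ℕ, (i : ℤ) ≤ cfQ α (nseq l) →
      Disjoint
        ((fun t : ℝ => (↑(t + (i : ℝ) * α) : AddCircle (1 : ℝ))) ''
          Set.Ico (∑ k ∈ Finset.Icc 1 (l - 1), 2 * Int.fract ((cfQ α (nseq k) : ℝ) * α))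
            ((∑ k ∈ Finset.Icc 1 (l - 1), 2 * Int.fract ((cfQ α (nseq k) : ℝ) * α)) +
              Int.fract ((cfQ α (nseq l) : ℝ) * α)))
        ((fun t : ℝ => (↑t : AddCircle (1 : ℝ))) ''
          (Set.Ico 0 (Int.fract ((cfQ α (nseq l) : ℝ) * α)) ∪
            Set.Ico (1 - Int.fract ((cfQ α (nseq l) : ℝ) * α)) 1))) := by
  have hl1 : 1 ≤ l := le_of_lt hl
  set N := nseq l with hN
  have hNeven : Even N := heven l hl1
  set q : ℤ := cfQ α N with hqdef
  set β : ℝ := Int.fract ((q : ℝ) * α) with hβdef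
  set s : ℝ := ∑ k ∈ Finset.Icc 1 (l - 1), 2 * Int.fract ((cfQ α (nseq k) : ℝ) * α)
    with hsdef
  have hβB : β = cfB α N := fract_q_mul α hirr N hNeven
  have hβpos : 0 < β := by rw [hβB]; exact cfB_pos α hirr N
  have hq1 : 1 ≤ q := cfQ_pos α hirr N
  set M : ℤ := ∑ k ∈ Finset.Icc 1 (l - 1), 2 * cfQ α (nseq k) with hM
  set P : ℤ := ∑ k ∈ Finset.Icc 1 (l - 1), 2 * ⌊(cfQ α (nseq k) : ℝ) * α⌋ with hP
  have hs : s = (M : ℝ) * α - (P : ℝ) := by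
    rw [hsdef, hM, hP]
    push_cast
    rw [Finset.sum_mul, ← Finset.sum_sub_distrib]
    apply Finset.sum_congr rfl
    intro k _
    simp only [Int.fract]
    ring
  have hM2 : 2 ≤ M := by
    rw [hM]
    have h1 : ∀ k ∈ Finset.Icc 1 (l-1), 0 ≤ 2 * cfQ α (nseq k) :=
      fun k _ => by linarith [cfQ_pos α hirr (nseq k)]
    have h2 := Finset.single_le_sum h1 (Finset.mem_Icc.2 ⟨le_refl 1, by omega⟩)
    linarith [cfQ_pos α hirr (nseq 1)]
  have hbound : M + 2 * q + 1 < cfQ α (N + 1) := by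
    have h3 := hA3 l hl1
    have h : l - 1 + 1 = l := by omega
    rw [← h, Finset.sum_Icc_succ_top (by omega : 1 ≤ l - 1 + 1)] at h3
    rw [h] at h3
    rw [← hM, ← hN, ← hqdef] at h3
    linarith
  -- the key arithmetic fact
  have key : ∀ m p : ℤ, m ≠ 0 → |m| ≤ M + 2 * q → ¬ (|(m : ℝ) * α - (p : ℝ)| < β) := by
    intro m p hm0 hmb hcon
    have := best_approx_abs α hirr N m p hm0 (by omega)
    rw [← hβB] at this
    linarith
  constructor
  · -- pairwise disjointness
    intro i j hi hj hij
    rw [Set.disjoint_left]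
    rintro z ⟨u, hu, rfl⟩ ⟨v, hv, hzv⟩
    obtain ⟨k, hk⟩ := coe_circle_sub _ _ hzv
    rw [Set.mem_Ico] at hu hv
    refine key ((j : ℤ) - (i : ℤ)) k (by omega)
      (by rw [abs_le]; constructor <;> omega) ?_
    have heq : ((j : ℝ) - (i : ℝ)) * α - (k : ℝ) = u - v := by
      linear_combination hk
    push_cast
    rw [abs_lt]
    constructor <;> linarith [hu.1, hu.2, hv.1, hv.2, heq]
  · -- disjointness from the forbidden zones
    intro i hi
    rw [Set.disjoint_left]
    rintro z ⟨u, hu, rfl⟩ ⟨v, hv, hzv⟩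
    obtain ⟨k, hk⟩ := coe_circle_sub _ _ hzv
    rw [Set.mem_Ico] at hu
    have hint : (0:ℤ) ≤ i := Int.natCast_nonneg i
    rcases hv with hv | hv
    · rw [Set.mem_Ico] at hv
      refine key (M + (i : ℤ)) (P - k) (by omega)
        (by rw [abs_le]; constructor <;> omega) ?_
      have heq : ((M : ℝ) + (i : ℝ)) * α - ((P : ℝ) - (k : ℝ)) = v - (u - s) := by
        linear_combination -hk - hs
      push_cast
      rw [abs_lt]
      constructor <;> linarith [hu.1, hu.2, hv.1, hv.2, heq]
    · rw [Set.mem_Ico] at hv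
      refine key (M + (i : ℤ) + q) (1 + ⌊(q : ℝ) * α⌋ + P - k) (by omega)
        (by rw [abs_le]; constructor <;> omega) ?_
      have hβf : β = (q : ℝ) * α - (⌊(q : ℝ) * α⌋ : ℝ) :=
        (Int.self_sub_floor ((q : ℝ) * α)).symm
      have heq : ((M : ℝ) + (i : ℝ) + (q : ℝ)) * α - (1 + (⌊(q : ℝ) * α⌋ : ℝ) + (P : ℝ) - (k : ℝ))
          = (v - (1 - β)) - (u - s) := by
        linear_combination -hk - hs - hβf
      push_cast
      rw [abs_lt]
      constructor <;> linarith [hu.1, hu.2, hv.1, hv.2, heq]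
end

section
/- Let α satisfy: q_{n+1} ≤ (a_{n+1} + 1) q_n for all n, and all a_i ≥ 2 with a_{n_k+1} = k + 8 along a sparse sequence n_k with n_k = 10^{k²} n_{k-1}, n_1 = 10, and a_i = 2 off the sequence {n_k + 1}. Then Σ_{i=1}^{n+1} a_i = O(log q_n) as n → ∞. -/
/-- For the specific continued fraction (`a_i = 2` off the sparse sequence `{n_k + 1}`,
`a_{n_k+1} = k + 8`), one has `∑_{i=1}^{n+1} a_i = O(log q_n)`. -/
theorem sum_partial_quotients_big_O (nseq : ℕ → ℕ) (hn1 : nseq 1 = 10)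
    (hnrec : ∀ k, 2 ≤ k → nseq k = 10 ^ (k ^ 2) * nseq (k - 1))
    (a : ℕ → ℕ)
    (ha_on : ∀ k, 1 ≤ k → a (nseq k + 1) = k + 8)
    (ha_off : ∀ i, (∀ k, 1 ≤ k → i ≠ nseq k + 1) → a i = 2)
    (q : ℕ → ℕ) (hq0 : q 0 = 1) (hq1 : q 1 = a 1)
    (hqrec : ∀ n, q (n + 2) = a (n + 2) * q (n + 1) + q n)
    (hqbound : ∀ n, q (n + 1) ≤ (a (n + 1) + 1) * q n) :
    ∃ M : ℝ, 0 < M ∧ ∀ n, 2 ≤ n →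
      (∑ i ∈ Finset.Icc 1 (n + 1), (a i : ℝ)) ≤ M * Real.log (q n) := by
  classical
  -- lower bounds on nseq
  have hpow : ∀ k, 1 ≤ k → 10 ^ (k ^ 2) ≤ nseq k := by
    intro k hk
    induction k with
    | zero => omega
    | succ m ih =>
      rcases Nat.eq_or_lt_of_le hk with h | h
      · simp [← h, hn1]
      · have hm1 : 1 ≤ m := by omega
        have := ih hm1
        rw [hnrec (m + 1) (by omega)]
        simp only [Nat.add_sub_cancel]
        have h1 : 1 ≤ nseq m := le_trans (Nat.one_le_pow _ _ (by norm_num)) this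
        calc 10 ^ ((m + 1) ^ 2) = 10 ^ ((m + 1) ^ 2) * 1 := by ring
          _ ≤ 10 ^ ((m + 1) ^ 2) * nseq m := by exact Nat.mul_le_mul_left _ h1
  have hsq : ∀ k, 1 ≤ k → k ^ 2 ≤ nseq k := by
    intro k hk
    exact le_trans (le_of_lt (Nat.lt_pow_self (by norm_num : 1 < 10))) (hpow k hk)
  have hk_le : ∀ k, 1 ≤ k → k ≤ nseq k := by
    intro k hk
    have : k ≤ k ^ 2 := by nlinarith
    exact le_trans this (hsq k hk)
  have hnpos : ∀ k, 1 ≤ k → 1 ≤ nseq k := fun k hk => le_trans hk (hk_le k hk)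
  -- strict monotonicity / injectivity
  have hstep : ∀ k, 1 ≤ k → nseq k < nseq (k + 1) := by
    intro k hk
    rw [hnrec (k + 1) (by omega)]
    simp only [Nat.add_sub_cancel]
    have h2 : 2 ≤ 10 ^ ((k + 1) ^ 2) := by
      calc 2 ≤ 10 := by norm_num
        _ = 10 ^ 1 := by norm_num
        _ ≤ 10 ^ ((k + 1) ^ 2) := Nat.pow_le_pow_right (by norm_num) (by nlinarith)
    have h1 : 1 ≤ nseq k := hnpos k hk
    nlinarith
  have hlt : ∀ j k, 1 ≤ j → j < k → nseq j < nseq k := by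
    intro j k hj hjk
    induction k with
    | zero => omega
    | succ m ih =>
      rcases Nat.lt_or_ge j m with h | h
      · exact lt_trans (ih h) (hstep m (by omega))
      · have : j = m := by omega
        subst this
        exact hstep j hj
  have hinj : ∀ j k, 1 ≤ j → 1 ≤ k → nseq j = nseq k → j = k := by
    intro j k hj hk h
    rcases lt_trichotomy j k with h1 | h1 | h1
    · exact absurd h (ne_of_lt (hlt j k hj h1))
    · exact h1
    · exact absurd h.symm (ne_of_lt (hlt k j hk h1))
  -- a i ≥ 2 everywhere
  have ha2 : ∀ i, 2 ≤ a i := by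
    intro i
    by_cases h : ∃ k, 1 ≤ k ∧ i = nseq k + 1
    · obtain ⟨k, hk, rfl⟩ := h
      rw [ha_on k hk]; omega
    · push_neg at h
      rw [ha_off i fun k hk => h k hk]
  -- q n ≥ 2^n
  have hq_ge : ∀ n, 2 ^ n ≤ q n := by
    intro n
    induction n using Nat.strong_induction_on with
    | _ n ih =>
      match n with
      | 0 => simp [hq0]
      | 1 => rw [hq1]; simpa using ha2 1
      | (m + 2) =>
        rw [hqrec m]
        have h1 : 2 ^ (m + 1) ≤ q (m + 1) := ih (m + 1) (by omega)
        have h2 : 2 ≤ a (m + 2) := ha2 (m + 2)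
        calc 2 ^ (m + 2) = 2 * 2 ^ (m + 1) := by ring
          _ ≤ a (m + 2) * q (m + 1) := Nat.mul_le_mul h2 h1
          _ ≤ a (m + 2) * q (m + 1) + q m := Nat.le_add_right _ _
  -- the sum bound in ℕ
  have hsum : ∀ n, 2 ≤ n → (∑ i ∈ Finset.Icc 1 (n + 1), a i) ≤ 10 * n := by
    intro n hn
    set E : ℕ → ℕ := fun i => a i - 2 with hE
    have hsplit : (∑ i ∈ Finset.Icc 1 (n + 1), a i)
        = (∑ i ∈ Finset.Icc 1 (n + 1), E i) + 2 * (n + 1) := by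
      have h1 : (∑ i ∈ Finset.Icc 1 (n + 1), a i)
          = ∑ i ∈ Finset.Icc 1 (n + 1), (E i + 2) := by
        apply Finset.sum_congr rfl
        intro i _
        simp only [hE]
        have := ha2 i
        omega
      rw [h1, Finset.sum_add_distrib, Finset.sum_const, Nat.card_Icc]
      simp only [smul_eq_mul]
      omega
    set T : Finset ℕ := (Finset.Icc 1 n).filter (fun k => nseq k + 1 ≤ n + 1) with hT
    have hsub : (Finset.Icc 1 (n + 1)).filter (fun i => E i ≠ 0)
        ⊆ T.image (fun k => nseq k + 1) := by
      intro i hi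
      simp only [Finset.mem_filter, Finset.mem_Icc] at hi
      obtain ⟨⟨hi1, hi2⟩, hiE⟩ := hi
      by_cases h : ∃ k, 1 ≤ k ∧ i = nseq k + 1
      · obtain ⟨k, hk, rfl⟩ := h
        simp only [Finset.mem_image, hT, Finset.mem_filter, Finset.mem_Icc]
        exact ⟨k, ⟨⟨hk, le_trans (hk_le k hk) (by omega)⟩, hi2⟩, rfl⟩
      · push_neg at h
        exact absurd (by simp [hE, ha_off i fun k hk => h k hk]) hiE
    have hEsum : (∑ i ∈ Finset.Icc 1 (n + 1), E i) ≤ 7 * n := by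
      have e1 : (∑ i ∈ Finset.Icc 1 (n + 1), E i)
          = ∑ i ∈ (Finset.Icc 1 (n + 1)).filter (fun i => E i ≠ 0), E i :=
        (Finset.sum_filter_ne_zero _).symm
      have e2 : (∑ i ∈ (Finset.Icc 1 (n + 1)).filter (fun i => E i ≠ 0), E i)
          ≤ ∑ i ∈ T.image (fun k => nseq k + 1), E i :=
        Finset.sum_le_sum_of_subset hsub
      have e3 : (∑ i ∈ T.image (fun k => nseq k + 1), E i)
          = ∑ k ∈ T, E (nseq k + 1) := by
        apply Finset.sum_image
        intro x hx y hy hxy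
        simp only [Finset.mem_coe, hT, Finset.mem_filter, Finset.mem_Icc] at hx hy
        exact hinj x y hx.1.1 hy.1.1 (by simp only at hxy; omega)
      have e4 : (∑ k ∈ T, E (nseq k + 1)) = ∑ k ∈ T, (k + 6) := by
        apply Finset.sum_congr rfl
        intro k hk
        simp only [hT, Finset.mem_filter, Finset.mem_Icc] at hk
        simp [hE, ha_on k hk.1.1]
      have hTsub : T ⊆ Finset.Icc 1 (Nat.sqrt n) := by
        intro k hk
        simp only [hT, Finset.mem_filter, Finset.mem_Icc] at hk
        obtain ⟨⟨hk1, _⟩, hk2⟩ := hk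
        have h1 : k ^ 2 ≤ n := le_trans (hsq k hk1) (by omega)
        simp only [Finset.mem_Icc]
        exact ⟨hk1, Nat.le_sqrt.mpr (by nlinarith)⟩
      have e5 : (∑ k ∈ T, (k + 6)) ≤ ∑ k ∈ Finset.Icc 1 (Nat.sqrt n), (k + 6) :=
        Finset.sum_le_sum_of_subset hTsub
      have e6 : (∑ k ∈ Finset.Icc 1 (Nat.sqrt n), (k + 6)) ≤ Nat.sqrt n * (Nat.sqrt n + 6) := by
        calc (∑ k ∈ Finset.Icc 1 (Nat.sqrt n), (k + 6))
            ≤ ∑ _k ∈ Finset.Icc 1 (Nat.sqrt n), (Nat.sqrt n + 6) := by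
              apply Finset.sum_le_sum
              intro k hk
              simp only [Finset.mem_Icc] at hk
              omega
          _ = (Nat.sqrt n) * (Nat.sqrt n + 6) := by
              rw [Finset.sum_const, Nat.card_Icc]; simp [mul_comm]
      have h7 : Nat.sqrt n * (Nat.sqrt n + 6) ≤ 7 * n := by
        have h1 : Nat.sqrt n ^ 2 ≤ n := Nat.sqrt_le' n
        have h2 : Nat.sqrt n ≤ n := Nat.sqrt_le_self n
        nlinarith
      omega
    omega
  -- conclude in ℝ
  refine ⟨10 / Real.log 2, by positivity, fun n hn => ?_⟩
  have hlog2 : (0 : ℝ) < Real.log 2 := Real.log_pos (by norm_num)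
  have hqpos : (0 : ℝ) < (q n : ℝ) := by
    have := hq_ge n
    have : 1 ≤ q n := le_trans (Nat.one_le_two_pow) this
    exact_mod_cast Nat.lt_of_lt_of_le Nat.zero_lt_one this
  have hlogq : (n : ℝ) * Real.log 2 ≤ Real.log (q n) := by
    have h1 : ((2 : ℝ) ^ n) ≤ (q n : ℝ) := by exact_mod_cast hq_ge n
    calc (n : ℝ) * Real.log 2 = Real.log (2 ^ n) := by
          rw [Real.log_pow]
      _ ≤ Real.log (q n) := Real.log_le_log (by positivity) h1
  have hsumn : (∑ i ∈ Finset.Icc 1 (n + 1), (a i : ℝ)) ≤ 10 * n := by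
    have := hsum n hn
    calc (∑ i ∈ Finset.Icc 1 (n + 1), (a i : ℝ))
        = ((∑ i ∈ Finset.Icc 1 (n + 1), a i : ℕ) : ℝ) := by push_cast; ring
      _ ≤ ((10 * n : ℕ) : ℝ) := by exact_mod_cast this
      _ = 10 * n := by push_cast; ring
  calc (∑ i ∈ Finset.Icc 1 (n + 1), (a i : ℝ)) ≤ 10 * n := hsumn
    _ = (10 / Real.log 2) * ((n : ℝ) * Real.log 2) := by field_simp
    _ ≤ (10 / Real.log 2) * Real.log (q n) := by
        apply mul_le_mul_of_nonneg_left hlogq (by positivity)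
end
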